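/- Let i, a, b, j, ℓ be even nonnegative integers with i ≤ a ≤ ℓ−2 and ℓ ≤ b ≤ j. Let A be the square matrix of size (a−i)/2 + 1 whose rows are indexed by r ∈ {i+2, i+4, …, a} ∪ {j} (in increasing order), whose columns are indexed by c ∈ {i, i+2, …, a−2} ∪ {b} (in increasing order), and whose (r,c)-entry is α(r,c) := (−1)^{(r−c)/2} · r! / (((r−c)/2)! · c! · 2^{(r−c)/2}) if r ≥ c, and 0 if r < c. Then det(A) = (−1)^{(j−b)/2} · (j! / (((j−b)/2)! · b! · 2^{(j−b)/2})) · (−1)^{(a−i)/2} · (a! / (((a−i)/2)! · i! · 2^{(a−i)/2})). -/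

import Mathlib

open Finset

/-- The entry `α(r,c) = (-1)^{(r-c)/2} · r! / (((r-c)/2)! · c! · 2^{(r-c)/2})` for `r ≥ c`,
and `0` for `r < c`. -/
noncomputable def alphaEnt (r c : ℕ) : ℝ :=
  if c ≤ r then
    (-1 : ℝ) ^ ((r - c) / 2) * (Nat.factorial r) /
      ((Nat.factorial ((r - c) / 2)) * (Nat.factorial c) * 2 ^ ((r - c) / 2))
  else 0

section AuxAlphaDet
open Nat

lemma alpha_eq (i k : ℕ) : alphaEnt (i + 2*k) i =
    (-1:ℝ)^k * (Nat.factorial (i+2*k)) /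
      (Nat.factorial k * Nat.factorial i * 2^k) := by
  unfold alphaEnt
  rw [if_pos (Nat.le_add_right i (2*k))]
  have h : (i + 2*k - i)/2 = k := by omega
  rw [h]

lemma alpha_zero {r c : ℕ} (h : r < c) : alphaEnt r c = 0 := if_neg (not_le.2 h)

lemma alpha_shift (i m N : ℕ) (h : m ≤ N) : alphaEnt (i + 2*N) (i + 2*m) =
    (-1:ℝ)^(N-m) * (Nat.factorial (i+2*N)) /
      (Nat.factorial (N-m) * Nat.factorial (i+2*m) * 2^(N-m)) := by
  have h2 : i + 2*N = (i+2*m) + 2*(N-m) := by omega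
  rw [h2, alpha_eq]

lemma term_eq (i m t : ℕ) (ht : t < m+1) :
    (-1:ℝ)^t * ((-1:ℝ)^(t+1) * (Nat.factorial (i+2*(t+1)) : ℝ) /
        (Nat.factorial (t+1) * Nat.factorial i * 2^(t+1))) *
      ((-1:ℝ)^(m+1-(t+1)) * (Nat.factorial (i+2*(m+1)) : ℝ) /
        (Nat.factorial (m+1-(t+1)) * Nat.factorial (i+2*(t+1)) * 2^(m+1-(t+1)))) =
    ((-1:ℝ)^(m+1) * (Nat.factorial (i+2*(m+1)) : ℝ) /
        (Nat.factorial (m+1) * Nat.factorial i * 2^(m+1))) *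
      ((-1:ℝ)^t * ((m+1).choose (t+1) : ℝ)) := by
  have hk : t + 1 ≤ m + 1 := ht
  have key : (Nat.factorial (m+1) : ℝ) = (((m+1).choose (t+1) : ℝ)) * (Nat.factorial (t+1)) * (Nat.factorial (m+1-(t+1))) := by
    exact_mod_cast congrArg (Nat.cast : ℕ → ℝ) (Nat.choose_mul_factorial_mul_factorial hk).symm
  have hs : (-1:ℝ)^(m+1) = (-1:ℝ)^(t+1) * (-1:ℝ)^(m+1-(t+1)) := by
    rw [← pow_add]; congr 1; omega
  have h2 : (2:ℝ)^(m+1) = (2:ℝ)^(t+1) * (2:ℝ)^(m+1-(t+1)) := by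
    rw [← pow_add]; congr 1; omega
  have f1 : (Nat.factorial (t+1) : ℝ) ≠ 0 := by positivity
  have f2 : (Nat.factorial i : ℝ) ≠ 0 := by positivity
  have f3 : (Nat.factorial (m+1-(t+1)) : ℝ) ≠ 0 := by positivity
  have f4 : (Nat.factorial (i+2*(t+1)) : ℝ) ≠ 0 := by positivity
  have f6 : (2:ℝ)^(t+1) ≠ 0 := by positivity
  have f7 : (2:ℝ)^(m+1-(t+1)) ≠ 0 := by positivity
  have f8 : (((m+1).choose (t+1) : ℕ) : ℝ) ≠ 0 :=
    Nat.cast_ne_zero.2 (Nat.choose_pos hk).ne'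
  rw [key, hs, h2]
  field_simp

lemma alt_sum (m : ℕ) :
    ∑ t ∈ Finset.range (m+1), (-1:ℝ)^t * ((m+1).choose (t+1) : ℝ) = 1 := by
  have h := Int.alternating_sum_range_choose (n := m+1)
  rw [if_neg (Nat.succ_ne_zero m)] at h
  have h' : ((∑ i ∈ Finset.range (m+1+1), (-1:ℤ)^i * ((m+1).choose i) : ℤ) : ℝ) = 0 := by
    rw [h]; norm_num
  push_cast at h'
  rw [Finset.sum_range_succ'] at h'
  simp only [pow_succ, pow_zero, choose_zero_right, Nat.cast_one, one_mul] at h'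
  have h2 : ∑ x ∈ Finset.range (m+1), (-1:ℝ)^x * -1 * ((m+1).choose (x+1) : ℝ)
      = -∑ t ∈ Finset.range (m+1), (-1:ℝ)^t * ((m+1).choose (t+1) : ℝ) := by
    rw [← Finset.sum_neg_distrib]
    exact Finset.sum_congr rfl fun x _ => by ring
  rw [h2] at h'
  linarith

lemma sum_alpha (i m : ℕ) :
    ∑ t : Fin (m+1), (-1:ℝ)^(t:ℕ) * alphaEnt (i + 2*((t:ℕ)+1)) i *
        alphaEnt (i + 2*(m+1)) (i + 2*((t:ℕ)+1)) = alphaEnt (i + 2*(m+1)) i := by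
  rw [Fin.sum_univ_eq_sum_range (fun t => (-1:ℝ)^t * alphaEnt (i + 2*(t+1)) i *
        alphaEnt (i + 2*(m+1)) (i + 2*(t+1)))]
  have step : ∀ t ∈ Finset.range (m+1),
      (-1:ℝ)^t * alphaEnt (i + 2*(t+1)) i * alphaEnt (i + 2*(m+1)) (i + 2*(t+1))
      = ((-1:ℝ)^(m+1) * (Nat.factorial (i+2*(m+1)) : ℝ) /
          (Nat.factorial (m+1) * Nat.factorial i * 2^(m+1))) *
        ((-1:ℝ)^t * ((m+1).choose (t+1) : ℝ)) := by
    intro t ht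
    rw [alpha_eq, alpha_shift i (t+1) (m+1) (Finset.mem_range.1 ht)]
    exact term_eq i m t (Finset.mem_range.1 ht)
  rw [Finset.sum_congr rfl step, ← Finset.mul_sum, alt_sum, mul_one, alpha_eq]


lemma alpha_diag (x : ℕ) : alphaEnt x x = 1 := by
  unfold alphaEnt
  rw [if_pos le_rfl, Nat.sub_self]
  simp [Nat.factorial]
  exact Nat.factorial_ne_zero x

lemma detc {f : ℕ → ℕ → ℝ} {n k : ℕ} (h : n = k) :
    (Matrix.of fun u s : Fin n => f u s).det = (Matrix.of fun u s : Fin k => f u s).det := by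
  subst h; rfl

lemma succAbove_val {m : ℕ} (t : Fin (m+1)) (u : Fin m) :
    ((t.succAbove u) : ℕ) = if (u:ℕ) < (t:ℕ) then (u:ℕ) else (u:ℕ)+1 := by
  rw [Fin.succAbove]
  split_ifs with h1 h2 h2 <;>
    simp_all [Fin.lt_def, Fin.coe_castSucc, Fin.val_succ]

lemma peel (t : ℕ) : ∀ (n k i : ℕ), n = t + k →
    (Matrix.of fun u s : Fin n =>
      alphaEnt (i + 2*((if (u:ℕ) < t then (u:ℕ) else (u:ℕ)+1)+1)) (i + 2*((s:ℕ)+1))).det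
    = (Matrix.of fun u s : Fin k =>
      alphaEnt ((i+2+2*t) + 2*((u:ℕ)+1)) ((i+2+2*t) + 2*(s:ℕ))).det := by
  induction t with
  | zero =>
    intro n k i h
    rw [detc (f := fun u s =>
      alphaEnt (i + 2*((if u < 0 then u else u+1)+1)) (i + 2*(s+1))) (show n = k by omega)]
    congr 1
    ext u s
    simp only [Matrix.of_apply, if_neg (Nat.not_lt_zero _)]
    rw [show i + 2*((u:ℕ)+1+1) = (i+2+2*0) + 2*((u:ℕ)+1) by ring,
        show i + 2*((s:ℕ)+1) = (i+2+2*0) + 2*(s:ℕ) by ring]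
  | succ t ih =>
    intro n k i h
    obtain ⟨n', rfl⟩ : ∃ n', n = n'+1 := ⟨t+k, by omega⟩
    rw [Matrix.det_succ_row_zero]
    rw [Finset.sum_eq_single_of_mem (0 : Fin (n'+1)) (Finset.mem_univ _) ?side]
    · simp only [Matrix.of_apply, Fin.val_zero, pow_zero, one_mul]
      simp only [show (0:ℕ) < t+1 from Nat.succ_pos t, ↓reduceIte]
      rw [show i + 2*(0+1) = i + 2*(0+1) from rfl]
      have hd : alphaEnt (i + 2*(0+1)) (i + 2*((0:ℕ)+1)) = 1 := alpha_diag _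
      rw [hd, one_mul]
      have hsub : ((Matrix.of fun u s : Fin (n'+1) =>
          alphaEnt (i + 2*((if (u:ℕ) < t+1 then (u:ℕ) else (u:ℕ)+1)+1))
            (i + 2*((s:ℕ)+1))).submatrix Fin.succ (Fin.succAbove 0)).det
          = (Matrix.of fun u s : Fin n' =>
          alphaEnt ((i+2) + 2*((if (u:ℕ) < t then (u:ℕ) else (u:ℕ)+1)+1))
            ((i+2) + 2*((s:ℕ)+1))).det := by
        congr 1
        ext u s
        simp only [Matrix.submatrix_apply, Matrix.of_apply, Fin.zero_succAbove, Fin.val_succ]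
        by_cases hu : (u:ℕ) < t
        · rw [if_pos (by omega : (u:ℕ)+1 < t+1), if_pos hu]
          rw [show i + 2*((u:ℕ)+1+1) = (i+2) + 2*((u:ℕ)+1) by ring,
              show i + 2*((s:ℕ)+1+1) = (i+2) + 2*((s:ℕ)+1) by ring]
        · rw [if_neg (by omega : ¬ ((u:ℕ)+1 < t+1)), if_neg hu]
          rw [show i + 2*((u:ℕ)+1+1+1) = (i+2) + 2*((u:ℕ)+1+1) by ring,
              show i + 2*((s:ℕ)+1+1) = (i+2) + 2*((s:ℕ)+1) by ring]
      rw [hsub, ih n' k (i+2) (by omega)]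
      congr 1
      ext u s
      simp only [Matrix.of_apply]
      rw [show (i+2)+2+2*t + 2*((u:ℕ)+1) = (i+2+2*(t+1)) + 2*((u:ℕ)+1) by ring,
          show (i+2)+2+2*t + 2*(s:ℕ) = (i+2+2*(t+1)) + 2*(s:ℕ) by ring]
    case side =>
      intro j _ hj
      have hj' : 1 ≤ (j:ℕ) := by
        rcases Nat.eq_zero_or_pos (j:ℕ) with h0 | h1
        · exact absurd (Fin.ext h0 : j = 0) hj
        · exact h1
      simp only [Matrix.of_apply, Fin.val_zero]
      simp only [show (0:ℕ) < t+1 from Nat.succ_pos t, ↓reduceIte]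
      rw [alpha_zero (by omega : i + 2*(0+1) < i + 2*((j:ℕ)+1))]
      ring

lemma Ddet (n : ℕ) : ∀ i : ℕ,
    (Matrix.of fun t s : Fin n =>
      alphaEnt (i + 2*((t:ℕ)+1)) (i + 2*(s:ℕ))).det = alphaEnt (i + 2*n) i := by
  induction n using Nat.strong_induction_on with
  | _ n ih => ?_
  match n with
  | 0 =>
    intro i
    rw [Matrix.det_fin_zero, show i + 2*0 = i by ring, alpha_diag]
  | (m+1) =>
    intro i
    rw [Matrix.det_succ_column_zero]
    have step : ∀ t : Fin (m+1),
        (-1:ℝ)^(t:ℕ) * (Matrix.of fun t s : Fin (m+1) =>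
            alphaEnt (i + 2*((t:ℕ)+1)) (i + 2*(s:ℕ))) t 0 *
          ((Matrix.of fun t s : Fin (m+1) =>
            alphaEnt (i + 2*((t:ℕ)+1)) (i + 2*(s:ℕ))).submatrix t.succAbove Fin.succ).det
        = (-1:ℝ)^(t:ℕ) * alphaEnt (i + 2*((t:ℕ)+1)) i *
            alphaEnt (i + 2*(m+1)) (i + 2*((t:ℕ)+1)) := by
      intro t
      have ht : (t:ℕ) ≤ m := Nat.lt_succ_iff.1 t.isLt
      have hsub : ((Matrix.of fun t s : Fin (m+1) =>
          alphaEnt (i + 2*((t:ℕ)+1)) (i + 2*(s:ℕ))).submatrix t.succAbove Fin.succ).det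
          = (Matrix.of fun u s : Fin m =>
            alphaEnt (i + 2*((if (u:ℕ) < (t:ℕ) then (u:ℕ) else (u:ℕ)+1)+1))
              (i + 2*((s:ℕ)+1))).det := by
        congr 1
        ext u s
        simp only [Matrix.submatrix_apply, Matrix.of_apply, Fin.val_succ, succAbove_val]
      rw [hsub, peel (t:ℕ) m (m - (t:ℕ)) i (by omega),
        ih (m - (t:ℕ)) (by omega) (i+2+2*(t:ℕ))]
      simp only [Matrix.of_apply, Fin.val_zero]
      rw [show i + 2*(0:ℕ) = i by ring,
          show i+2+2*(t:ℕ) + 2*(m-(t:ℕ)) = i + 2*(m+1) by omega,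
          show i+2+2*(t:ℕ) = i + 2*((t:ℕ)+1) by ring]
    rw [Finset.sum_congr rfl (fun t _ => step t)]
    exact sum_alpha i m

end AuxAlphaDet

/-- Determinant of the matrix with rows indexed by `{i+2, i+4, …, a} ∪ {j}`, columns indexed
by `{i, i+2, …, a-2} ∪ {b}`, and entries `α(r,c)`. -/
theorem det_alpha_row_and_column_replaced (i a b j ℓ : ℕ)
    (hi : Even i) (ha : Even a) (hb : Even b) (hj : Even j) (hℓ : Even ℓ)
    (hia : i ≤ a) (haℓ : a + 2 ≤ ℓ) (hℓb : ℓ ≤ b) (hbj : b ≤ j) :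
    (Matrix.of fun t s : Fin ((a - i) / 2 + 1) =>
        alphaEnt (if (t : ℕ) < (a - i) / 2 then i + 2 * ((t : ℕ) + 1) else j)
          (if (s : ℕ) < (a - i) / 2 then i + 2 * (s : ℕ) else b)).det =
      ((-1 : ℝ) ^ ((j - b) / 2) *
          ((Nat.factorial j) /
            (Nat.factorial ((j - b) / 2) * Nat.factorial b * 2 ^ ((j - b) / 2)))) *
        ((-1 : ℝ) ^ ((a - i) / 2) *
          ((Nat.factorial a) /
            (Nat.factorial ((a - i) / 2) * Nat.factorial i * 2 ^ ((a - i) / 2)))) := by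
  obtain ⟨p, hp⟩ := hi
  obtain ⟨q, hq⟩ := ha
  have h2n : a = i + 2*((a-i)/2) := by omega
  set n := (a-i)/2 with hn
  clear_value n
  rw [Matrix.det_succ_column _ (Fin.last n)]
  rw [Finset.sum_eq_single_of_mem (Fin.last n) (Finset.mem_univ _) ?side]
  · simp only [Matrix.of_apply, Fin.val_last]
    rw [if_neg (lt_irrefl n), if_neg (lt_irrefl n), Fin.succAbove_last]
    have hsub : ((Matrix.of fun t s : Fin (n + 1) =>
        alphaEnt (if (t : ℕ) < n then i + 2 * ((t : ℕ) + 1) else j)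
          (if (s : ℕ) < n then i + 2 * (s : ℕ) else b)).submatrix
            Fin.castSucc Fin.castSucc).det
        = (Matrix.of fun t s : Fin n =>
            alphaEnt (i + 2*((t:ℕ)+1)) (i + 2*(s:ℕ))).det := by
      congr 1
      ext t s
      simp only [Matrix.submatrix_apply, Matrix.of_apply, Fin.coe_castSucc,
        if_pos t.isLt, if_pos s.isLt]
    rw [hsub, Ddet n i, ← h2n,
      show (-1:ℝ)^(n+n) = 1 from Even.neg_one_pow ⟨n, rfl⟩, one_mul]
    unfold alphaEnt
    rw [if_pos hbj, if_pos hia, ← hn]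
    ring
  case side =>
    intro t _ ht
    have htn : (t:ℕ) < n := by
      have h1 : (t:ℕ) < n + 1 := t.isLt
      rcases Nat.lt_or_ge (t:ℕ) n with h | h
      · exact h
      · exact absurd (Fin.ext (show (t:ℕ) = n by omega) : t = Fin.last n) ht
    simp only [Matrix.of_apply, Fin.val_last]
    rw [if_neg (lt_irrefl n), if_pos htn,
      alpha_zero (show i + 2*((t:ℕ)+1) < b by omega)]
    ring
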